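/- Let P(x) be a real polynomial of degree at most N that is nonnegative on [0,1]. Then there exist complex numbers A_0, ..., A_N such that P(cos²(θ/2)) = |Σ_{k=0}^{N} A_k e^{ikθ}|² for all real θ. -/

import Mathlib

open Complex Polynomial

lemma nonneg_of_closure (g : Polynomial ℝ) (s : Set ℝ) (hs : Set.Icc (0:ℝ) 1 ⊆ closure s)
    (h : ∀ x ∈ s, 0 ≤ g.eval x) : ∀ x ∈ Set.Icc (0:ℝ) 1, 0 ≤ g.eval x := by
  intro x hx
  have hcl : closure s ⊆ {x : ℝ | 0 ≤ g.eval x} :=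
    closure_minimal h (isClosed_le continuous_const g.continuous)
  exact hcl (hs hx)

lemma expZ (θ : ℝ) : (Complex.exp (Complex.I * θ) + 1)^2
    = 4 * ((Real.cos (θ/2) : ℂ))^2 * Complex.exp (Complex.I * θ) := by
  have hw : Complex.exp (Complex.I * θ) = Complex.exp ((θ/2 : ℝ) * Complex.I) ^ 2 := by
    rw [← Complex.exp_nat_mul]; congr 1; push_cast; ring
  have hpyth : (Real.sin (θ/2) : ℂ)^2 + (Real.cos (θ/2) : ℂ)^2 = 1 := by
    exact_mod_cast Real.sin_sq_add_cos_sq (θ/2)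
  have hb : Complex.exp ((θ/2 : ℝ) * Complex.I) ^ 2 + 1
      = 2 * (Real.cos (θ/2) : ℂ) * Complex.exp ((θ/2 : ℝ) * Complex.I) := by
    rw [Complex.exp_mul_I, ← Complex.ofReal_cos, ← Complex.ofReal_sin]
    linear_combination (Real.sin (θ/2) : ℂ)^2 * Complex.I_sq - hpyth
  rw [hw, hb]; ring

lemma key_abs (r β : ℂ) (hβ : β ≠ 0) (hsum : β + β⁻¹ = 4*r - 2) (θ : ℝ) :
    4 * (norm : ℂ → ℝ) β * (norm : ℂ → ℝ) ((Real.cos (θ/2) : ℂ)^2 - r)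
      = (norm : ℂ → ℝ) (Complex.exp (Complex.I * θ) - β)
        * (norm : ℂ → ℝ) (Complex.exp (Complex.I * θ) - (starRingEnd ℂ) β) := by
  set z := Complex.exp (Complex.I * θ) with hzdef
  have hz1 : (norm : ℂ → ℝ) z = 1 := by
    rw [hzdef, Complex.norm_exp]; simp
  have hzc : z * (starRingEnd ℂ) z = 1 := by
    rw [Complex.mul_conj, Complex.normSq_eq_norm_sq, hz1]; norm_num
  have hββ : β * β⁻¹ = 1 := mul_inv_cancel₀ hβ
  have h4 : 4 * z * ((Real.cos (θ/2) : ℂ)^2 - r) = (z - β) * (z - β⁻¹) := by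
    have hZ := expZ θ
    rw [← hzdef] at hZ
    linear_combination (-1 : ℂ)*hZ + z*hsum - hββ
  have habs : 4 * (norm : ℂ → ℝ) ((Real.cos (θ/2) : ℂ)^2 - r)
      = (norm : ℂ → ℝ) (z - β) * (norm : ℂ → ℝ) (z - β⁻¹) := by
    have h := congrArg (norm : ℂ → ℝ) h4
    simpa [norm_mul, hz1] using h
  have hconjid : (starRingEnd ℂ) (β * z - 1) * z = (starRingEnd ℂ) β - z := by
    rw [map_sub, map_mul, map_one]
    linear_combination (starRingEnd ℂ) β * hzc
  have hinv : (norm : ℂ → ℝ) β * (norm : ℂ → ℝ) (z - β⁻¹) = (norm : ℂ → ℝ) (z - (starRingEnd ℂ) β) := by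
    have h5 : β * (z - β⁻¹) = β * z - 1 := by
      rw [mul_sub, hββ]
    calc (norm : ℂ → ℝ) β * (norm : ℂ → ℝ) (z - β⁻¹) = (norm : ℂ → ℝ) (β * (z - β⁻¹)) := (norm_mul _ _).symm
      _ = (norm : ℂ → ℝ) (β * z - 1) := by rw [h5]
      _ = (norm : ℂ → ℝ) ((starRingEnd ℂ) (β * z - 1)) := (Complex.norm_conj _).symm
      _ = (norm : ℂ → ℝ) ((starRingEnd ℂ) (β * z - 1) * z) := by rw [norm_mul, hz1, mul_one]
      _ = (norm : ℂ → ℝ) ((starRingEnd ℂ) β - z) := by rw [hconjid]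
      _ = (norm : ℂ → ℝ) (z - (starRingEnd ℂ) β) := by rw [show (starRingEnd ℂ) β - z = -(z - (starRingEnd ℂ) β) by ring, norm_neg]
  calc 4 * (norm : ℂ → ℝ) β * (norm : ℂ → ℝ) ((Real.cos (θ/2) : ℂ)^2 - r)
      = (norm : ℂ → ℝ) β * (4 * (norm : ℂ → ℝ) ((Real.cos (θ/2) : ℂ)^2 - r)) := by ring
    _ = (norm : ℂ → ℝ) β * ((norm : ℂ → ℝ) (z - β) * (norm : ℂ → ℝ) (z - β⁻¹)) := by rw [habs]
    _ = (norm : ℂ → ℝ) (z - β) * ((norm : ℂ → ℝ) β * (norm : ℂ → ℝ) (z - β⁻¹)) := by ring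
    _ = (norm : ℂ → ℝ) (z - β) * (norm : ℂ → ℝ) (z - (starRingEnd ℂ) β) := by rw [hinv]

lemma exists_beta (w : ℂ) : ∃ β : ℂ, β ≠ 0 ∧ β + β⁻¹ = w := by
  obtain ⟨β, hβ⟩ := IsAlgClosed.exists_root (k := ℂ) (C 1 * X^2 + C (-w) * X + C 1)
    (by rw [Polynomial.degree_quadratic one_ne_zero]; decide)
  have hroot : β^2 - w*β + 1 = 0 := by
    have := hβ
    simp only [IsRoot, eval_add, eval_mul, eval_pow, eval_C, eval_X, one_mul] at this
    linear_combination this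
  have hβ0 : β ≠ 0 := by
    intro h; rw [h] at hroot; norm_num at hroot
  refine ⟨β, hβ0, ?_⟩
  field_simp
  linear_combination hroot

lemma stepA (P₁ : Polynomial ℝ) (Q₁ : Polynomial ℂ) (r b : ℝ) (hb : b ≠ 0)
    (hsum : (b:ℂ) + (b:ℂ)⁻¹ = 4*(r:ℂ) - 2)
    (hQ₁ : ∀ θ : ℝ, P₁.eval (Real.cos (θ/2)^2)
      = ((norm : ℂ → ℝ) (Q₁.eval (Complex.exp (Complex.I*θ))))^2) :
    ∃ Q : Polynomial ℂ, Q.natDegree ≤ Q₁.natDegree + 1 ∧ ∀ θ : ℝ,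
      |Real.cos (θ/2)^2 - r| * P₁.eval (Real.cos (θ/2)^2)
        = ((norm : ℂ → ℝ) (Q.eval (Complex.exp (Complex.I*θ))))^2 := by
  set s : ℝ := (Real.sqrt (4*|b|))⁻¹ with hs
  refine ⟨C (s:ℂ) * ((X - C (b:ℂ)) * Q₁), ?_, ?_⟩
  · calc (C (s:ℂ) * ((X - C (b:ℂ)) * Q₁)).natDegree
        ≤ (C (s:ℂ)).natDegree + ((X - C (b:ℂ)) * Q₁).natDegree := natDegree_mul_le
      _ ≤ (C (s:ℂ)).natDegree + ((X - C (b:ℂ)).natDegree + Q₁.natDegree) :=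
          Nat.add_le_add_left natDegree_mul_le _
      _ ≤ Q₁.natDegree + 1 := by
          rw [natDegree_C, natDegree_X_sub_C]; omega
  · intro θ
    set z := Complex.exp (Complex.I*θ) with hz
    have hb4 : (0:ℝ) < 4 * |b| := by positivity
    have hkey := key_abs (r:ℂ) (b:ℂ) (by exact_mod_cast hb) hsum θ
    rw [Complex.conj_ofReal] at hkey
    have habs1 : (norm : ℂ → ℝ) ((b:ℂ)) = |b| := by rw [Complex.norm_real, Real.norm_eq_abs]
    have habs2 : (norm : ℂ → ℝ) ((Real.cos (θ/2) : ℂ)^2 - (r:ℂ)) = |Real.cos (θ/2)^2 - r| := by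
      rw [show ((Real.cos (θ/2) : ℂ)^2 - (r:ℂ)) = ((Real.cos (θ/2)^2 - r : ℝ) : ℂ) by push_cast; ring,
        Complex.norm_real, Real.norm_eq_abs]
    rw [habs1, habs2, ← hz] at hkey
    have hseval : (C (s:ℂ) * ((X - C (b:ℂ)) * Q₁)).eval z = (s:ℂ) * ((z - (b:ℂ)) * Q₁.eval z) := by
      simp
    rw [hseval]
    have habss : (norm : ℂ → ℝ) ((s:ℂ) * ((z - (b:ℂ)) * Q₁.eval z))
        = s * ((norm : ℂ → ℝ) (z - (b:ℂ)) * (norm : ℂ → ℝ) (Q₁.eval z)) := by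
      rw [norm_mul, norm_mul, Complex.norm_real, Real.norm_eq_abs, _root_.abs_of_nonneg (by positivity)]
    rw [habss, hQ₁ θ]
    have hs2 : s^2 = (4*|b|)⁻¹ := by
      rw [hs, ← Real.sqrt_inv]; exact Real.sq_sqrt (by positivity)
    have h1 : |Real.cos (θ/2)^2 - r| = (norm : ℂ → ℝ) (z - (b:ℂ)) * (norm : ℂ → ℝ) (z - (b:ℂ)) / (4*|b|) := by
      rw [← hkey]; field_simp
    rw [h1, mul_pow, mul_pow, hs2]
    ring

lemma stepB (P₂ : Polynomial ℝ) (q : Polynomial ℝ) (Q₂ : Polynomial ℂ) (β : ℂ) (hβ : β ≠ 0)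
    (hq : ∀ θ : ℝ, q.eval (Real.cos (θ/2)^2)
        = (((norm : ℂ → ℝ) (Complex.exp (Complex.I*θ) - β)
            * (norm : ℂ → ℝ) (Complex.exp (Complex.I*θ) - (starRingEnd ℂ) β)) / (4 * (norm : ℂ → ℝ) β))^2)
    (hQ₂ : ∀ θ : ℝ, P₂.eval (Real.cos (θ/2)^2)
      = ((norm : ℂ → ℝ) (Q₂.eval (Complex.exp (Complex.I*θ))))^2) :
    ∃ Q : Polynomial ℂ, Q.natDegree ≤ Q₂.natDegree + 2 ∧ ∀ θ : ℝ,
      (q * P₂).eval (Real.cos (θ/2)^2)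
        = ((norm : ℂ → ℝ) (Q.eval (Complex.exp (Complex.I*θ))))^2 := by
  refine ⟨C (((4 * (norm : ℂ → ℝ) β)⁻¹ : ℝ) : ℂ) * ((X - C β) * (X - C ((starRingEnd ℂ) β)) * Q₂), ?_, ?_⟩
  · calc (C (((4 * (norm : ℂ → ℝ) β)⁻¹ : ℝ) : ℂ) * ((X - C β) * (X - C ((starRingEnd ℂ) β)) * Q₂)).natDegree
        ≤ 0 + ((X - C β) * (X - C ((starRingEnd ℂ) β)) * Q₂).natDegree := by
          refine le_trans natDegree_mul_le ?_; rw [natDegree_C]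
      _ ≤ 0 + (((X - C β) * (X - C ((starRingEnd ℂ) β))).natDegree + Q₂.natDegree) := by
          exact Nat.add_le_add_left natDegree_mul_le _
      _ ≤ Q₂.natDegree + 2 := by
          have : ((X - C β) * (X - C ((starRingEnd ℂ) β))).natDegree ≤ 2 := by
            refine le_trans natDegree_mul_le ?_
            rw [natDegree_X_sub_C, natDegree_X_sub_C]
          omega
  · intro θ
    set z := Complex.exp (Complex.I*θ) with hz
    have heval : (C (((4 * (norm : ℂ → ℝ) β)⁻¹ : ℝ) : ℂ) * ((X - C β) * (X - C ((starRingEnd ℂ) β)) * Q₂)).eval z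
        = (((4 * (norm : ℂ → ℝ) β)⁻¹ : ℝ) : ℂ) * ((z - β) * (z - (starRingEnd ℂ) β) * Q₂.eval z) := by
      simp
    rw [eval_mul, hq θ, hQ₂ θ, heval, norm_mul, norm_mul, norm_mul, Complex.norm_real, Real.norm_eq_abs,
      _root_.abs_of_nonneg (by positivity)]
    ring


lemma exists_beta_real (r : ℝ) (hr : 0 ≤ r*(r-1)) :
    ∃ b : ℝ, b ≠ 0 ∧ (b:ℂ) + (b:ℂ)⁻¹ = 4*(r:ℂ) - 2 := by
  set b : ℝ := (2*r-1) + 2*Real.sqrt (r*(r-1)) with hbdef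
  set b' : ℝ := (2*r-1) - 2*Real.sqrt (r*(r-1)) with hb'def
  have hsq : Real.sqrt (r*(r-1)) ^ 2 = r*(r-1) := Real.sq_sqrt hr
  have hbb' : b * b' = 1 := by rw [hbdef, hb'def]; nlinarith [hsq]
  have hb0 : b ≠ 0 := by intro h; rw [h, zero_mul] at hbb'; norm_num at hbb'
  have hinv : b⁻¹ = b' := inv_eq_of_mul_eq_one_right hbb'
  refine ⟨b, hb0, ?_⟩
  have : b + b⁻¹ = 4*r - 2 := by rw [hinv, hbdef, hb'def]; ring
  calc (b:ℂ) + (b:ℂ)⁻¹ = ((b + b⁻¹ : ℝ) : ℂ) := by push_cast; ring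
    _ = 4*(r:ℂ) - 2 := by rw [this]; push_cast; ring

lemma fejer_aux : ∀ d : ℕ, ∀ P : Polynomial ℝ, P.natDegree ≤ d →
    (∀ x ∈ Set.Icc (0:ℝ) 1, 0 ≤ P.eval x) →
    ∃ Q : Polynomial ℂ, Q.natDegree ≤ d ∧ ∀ θ : ℝ,
      P.eval (Real.cos (θ/2)^2) = ((norm : ℂ → ℝ) (Q.eval (Complex.exp (Complex.I * θ))))^2 := by
  intro d
  induction d using Nat.strong_induction_on with
  | _ d IH =>
  intro P hdeg hpos
  by_cases hP0 : P = 0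
  · exact ⟨0, by simp, fun θ => by simp [hP0]⟩
  by_cases hd0 : P.natDegree = 0
  · have hPC : P = C (P.coeff 0) := Polynomial.eq_C_of_natDegree_eq_zero hd0
    have ha : 0 ≤ P.coeff 0 := by
      have := hpos 0 ⟨le_refl _, zero_le_one⟩
      rwa [hPC, eval_C] at this
    refine ⟨C ((Real.sqrt (P.coeff 0) : ℝ) : ℂ), by simp, fun θ => ?_⟩
    have hev : P.eval (Real.cos (θ/2)^2) = P.coeff 0 := by
      conv_lhs => rw [hPC, eval_C]
    rw [hev, eval_C, Complex.norm_real, Real.norm_eq_abs,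
      _root_.abs_of_nonneg (Real.sqrt_nonneg _), Real.sq_sqrt ha]
  have hd1 : 1 ≤ P.natDegree := Nat.one_le_iff_ne_zero.mpr hd0
  set Pc : Polynomial ℂ := P.map (algebraMap ℝ ℂ) with hPcdef
  have hPceval : ∀ z : ℂ, Pc.eval z = aeval z P := fun z => by
    rw [hPcdef, eval_map, ← aeval_def]
  have hdegc : Pc.degree ≠ 0 := by
    rw [hPcdef, degree_map_eq_of_injective (algebraMap ℝ ℂ).injective,
      degree_eq_natDegree hP0]
    exact_mod_cast hd0
  obtain ⟨α, hα⟩ := IsAlgClosed.exists_root Pc hdegc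
  have hα' : Pc.eval α = 0 := hα
  by_cases him : α.im = 0
  · -- real root
    set r := α.re with hrdef
    have hαr : α = (r:ℂ) := Complex.ext rfl (by simp [him])
    have hroot : P.eval r = 0 := by
      have h1 : Pc.eval ((algebraMap ℝ ℂ) r) = (algebraMap ℝ ℂ) (P.eval r) := by
        rw [hPcdef, eval_map, eval₂_at_apply]
      have h2 : (algebraMap ℝ ℂ) r = (r:ℂ) := rfl
      rw [h2, ← hαr, hα'] at h1
      have h1 : (0:ℂ) = ((P.eval r : ℝ) : ℂ) := by
        rw [h1]; rfl
      exact_mod_cast h1.symm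
    have hfac1 : (X - C r) * (P /ₘ (X - C r)) = P := mul_divByMonic_eq_iff_isRoot.mpr hroot
    set P₁ := P /ₘ (X - C r) with hP₁def
    have hP₁0 : P₁ ≠ 0 := by
      intro h; rw [h, mul_zero] at hfac1; exact hP0 hfac1.symm
    have hdeg₁ : P₁.natDegree = P.natDegree - 1 := by
      rw [hP₁def, natDegree_divByMonic P (monic_X_sub_C r), natDegree_X_sub_C]
    have hPeval : ∀ x : ℝ, P.eval x = (x - r) * P₁.eval x := fun x => by
      conv_lhs => rw [← hfac1]
      rw [eval_mul, eval_sub, eval_X, eval_C]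
    rcases le_or_gt r 0 with hr | hr
    · -- r ≤ 0
      have hpos₁ : ∀ x ∈ Set.Icc (0:ℝ) 1, 0 ≤ P₁.eval x := by
        apply nonneg_of_closure P₁ (Set.Ioo 0 1)
        · rw [closure_Ioo (by norm_num : (0:ℝ) ≠ 1)]
        · intro x hx
          have hx0 : 0 < x - r := by linarith [hx.1]
          have hPx : 0 ≤ (x - r) * P₁.eval x := by
            rw [← hPeval]; exact hpos x ⟨le_of_lt hx.1, le_of_lt hx.2⟩
          nlinarith
      obtain ⟨Q₁, hQ₁deg, hQ₁⟩ := IH (d-1) (by omega) P₁ (by omega) hpos₁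
      obtain ⟨b, hb, hsum⟩ := exists_beta_real r (by nlinarith)
      obtain ⟨Q, hQdeg, hQ⟩ := stepA P₁ Q₁ r b hb hsum hQ₁
      refine ⟨Q, by omega, fun θ => ?_⟩
      have hc2 : 0 ≤ Real.cos (θ/2)^2 - r := by nlinarith [sq_nonneg (Real.cos (θ/2))]
      have hQ' := hQ θ
      rw [_root_.abs_of_nonneg hc2] at hQ'
      rw [hPeval]
      exact hQ'
    rcases le_or_gt 1 r with hr1 | hr1
    · -- r ≥ 1
      have hpos₁ : ∀ x ∈ Set.Icc (0:ℝ) 1, 0 ≤ (-P₁).eval x := by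
        apply nonneg_of_closure (-P₁) (Set.Ioo 0 1)
        · rw [closure_Ioo (by norm_num : (0:ℝ) ≠ 1)]
        · intro x hx
          have hx0 : x - r < 0 := by linarith [hx.2]
          have hPx : 0 ≤ (x - r) * P₁.eval x := by
            rw [← hPeval]; exact hpos x ⟨le_of_lt hx.1, le_of_lt hx.2⟩
          rw [eval_neg]
          nlinarith
      obtain ⟨Q₁, hQ₁deg, hQ₁⟩ := IH (d-1) (by omega) (-P₁)
        (by rw [natDegree_neg]; omega) hpos₁
      obtain ⟨b, hb, hsum⟩ := exists_beta_real r (by nlinarith)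
      obtain ⟨Q, hQdeg, hQ⟩ := stepA (-P₁) Q₁ r b hb hsum hQ₁
      refine ⟨Q, by omega, fun θ => ?_⟩
      have hc2 : Real.cos (θ/2)^2 - r ≤ 0 := by
        nlinarith [Real.neg_one_le_cos (θ/2), Real.cos_le_one (θ/2),
          sq_nonneg (Real.cos (θ/2) - 1), sq_nonneg (Real.cos (θ/2) + 1)]
      have hQ' := hQ θ
      rw [_root_.abs_of_nonpos hc2, eval_neg] at hQ'
      rw [hPeval]
      linarith [hQ']
    · -- 0 < r < 1 : double root
      have hder : P₁.eval r = 0 := by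
        have hmin : IsLocalMin (fun x => P.eval x) r := by
          have hm : Set.Icc (0:ℝ) 1 ∈ nhds r := Icc_mem_nhds hr hr1
          refine Filter.eventually_of_mem hm (fun x hx => ?_)
          show P.eval r ≤ P.eval x
          rw [hroot]; exact hpos x hx
        have hderiv : P.derivative.eval r = 0 := by
          have h := hmin.deriv_eq_zero
          rwa [Polynomial.deriv] at h
        have hder' : P.derivative = P₁ + (X - C r) * P₁.derivative := by
          conv_lhs => rw [← hfac1]
          rw [derivative_mul, derivative_sub, derivative_X, derivative_C, sub_zero, one_mul]
        rw [hder', eval_add, eval_mul, eval_sub, eval_X, eval_C, sub_self,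
          zero_mul, add_zero] at hderiv
        exact hderiv
      have hfac2 : (X - C r) * (P₁ /ₘ (X - C r)) = P₁ := mul_divByMonic_eq_iff_isRoot.mpr hder
      set P₂ := P₁ /ₘ (X - C r) with hP₂def
      have hP : P = (X - C r)^2 * P₂ := by
        rw [← hfac1, ← hfac2]; ring
      have hP₂0 : P₂ ≠ 0 := by
        intro h; rw [h, mul_zero] at hP; exact hP0 hP
      have hnd : P.natDegree = 2 + P₂.natDegree := by
        rw [hP, natDegree_mul (pow_ne_zero 2 (X_sub_C_ne_zero r)) hP₂0,
          natDegree_pow, natDegree_X_sub_C]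
      have hpos₂ : ∀ x ∈ Set.Icc (0:ℝ) 1, 0 ≤ P₂.eval x := by
        apply nonneg_of_closure P₂ (Set.Ioo 0 1 \ {r})
        · intro x hx
          have h1 : Set.Ioo (0:ℝ) r ∪ Set.Ioo r 1 ⊆ Set.Ioo 0 1 \ {r} := by
            rintro y (hy | hy)
            · exact ⟨⟨hy.1, lt_trans hy.2 hr1⟩, ne_of_lt hy.2⟩
            · exact ⟨⟨lt_trans hr hy.1, hy.2⟩, ne_of_gt hy.1⟩
          have h2 := closure_mono h1
          rw [closure_union, closure_Ioo (ne_of_lt hr), closure_Ioo (ne_of_lt hr1)] at h2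
          apply h2
          rcases le_total x r with h | h
          · exact Or.inl ⟨hx.1, h⟩
          · exact Or.inr ⟨h, hx.2⟩
        · intro x hx
          have hxr : x ≠ r := hx.2
          have hsq : 0 < (x - r)^2 := lt_of_le_of_ne (sq_nonneg _) (Ne.symm (pow_ne_zero 2 (sub_ne_zero.mpr hxr)))
          have hPx : 0 ≤ (x - r)^2 * P₂.eval x := by
            have := hpos x ⟨le_of_lt hx.1.1, le_of_lt hx.1.2⟩
            rwa [hP, eval_mul, eval_pow, eval_sub, eval_X, eval_C] at this
          nlinarith
      obtain ⟨Q₂, hQ₂deg, hQ₂⟩ := IH (d-2) (by omega) P₂ (by omega) hpos₂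
      obtain ⟨β, hβ, hsum⟩ := exists_beta (4*(r:ℂ) - 2)
      have hβpos : 0 < (norm : ℂ → ℝ) β := norm_pos_iff.mpr hβ
      have hq : ∀ θ : ℝ, ((X - C r)^2).eval (Real.cos (θ/2)^2)
          = (((norm : ℂ → ℝ) (Complex.exp (Complex.I*θ) - β)
              * (norm : ℂ → ℝ) (Complex.exp (Complex.I*θ) - (starRingEnd ℂ) β))
              / (4 * (norm : ℂ → ℝ) β))^2 := by
        intro θ
        have hkey := key_abs (r:ℂ) β hβ hsum θ
        have habs2 : (norm : ℂ → ℝ) ((Real.cos (θ/2) : ℂ)^2 - (r:ℂ)) = |Real.cos (θ/2)^2 - r| := by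
          rw [show ((Real.cos (θ/2) : ℂ)^2 - (r:ℂ)) = ((Real.cos (θ/2)^2 - r : ℝ) : ℂ)
            by push_cast; ring, Complex.norm_real, Real.norm_eq_abs]
        rw [habs2] at hkey
        have h3 : ((norm : ℂ → ℝ) (Complex.exp (Complex.I*θ) - β)
            * (norm : ℂ → ℝ) (Complex.exp (Complex.I*θ) - (starRingEnd ℂ) β)) / (4 * (norm : ℂ → ℝ) β)
            = |Real.cos (θ/2)^2 - r| := by
          rw [← hkey]; field_simp
        rw [h3, _root_.sq_abs, eval_pow, eval_sub, eval_X, eval_C]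
      obtain ⟨Q, hQdeg, hQ⟩ := stepB P₂ ((X - C r)^2) Q₂ β hβ hq hQ₂
      refine ⟨Q, by omega, fun θ => ?_⟩
      rw [hP]
      exact hQ θ
  · -- complex root
    set a := α.re with hadef
    set b := α.im with hbdef
    have hconjroot : Pc.eval ((starRingEnd ℂ) α) = 0 := by
      rw [hPceval, Polynomial.aeval_conj, ← hPceval, hα', map_zero]
    set q : Polynomial ℝ := (X - C a)^2 + C (b^2) with hqdef
    have hqmonic : q.Monic := by
      apply Polynomial.Monic.add_of_left ((monic_X_sub_C a).pow 2)
      rw [degree_pow, degree_X_sub_C]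
      exact lt_of_le_of_lt degree_C_le (by norm_num)
    have hqdeg : q.natDegree = 2 := by
      have h1 : ((X - C a)^2 : Polynomial ℝ).natDegree = 2 := by
        rw [natDegree_pow, natDegree_X_sub_C]
      rw [hqdef]
      compute_degree!
    have hqc : q.map (algebraMap ℝ ℂ) = (X - C α) * (X - C ((starRingEnd ℂ) α)) := by
      have hαab : α = (a:ℂ) + (b:ℂ)*Complex.I := by
        rw [hadef, hbdef, Complex.re_add_im]
      have hconjab : (starRingEnd ℂ) α = (a:ℂ) - (b:ℂ)*Complex.I := by
        rw [hαab, map_add, map_mul, Complex.conj_ofReal, Complex.conj_ofReal, Complex.conj_I]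
        ring
      apply Polynomial.funext
      intro x
      rw [hqdef, Polynomial.eval_map]
      rw [Polynomial.eval₂_add, Polynomial.eval₂_pow, Polynomial.eval₂_sub,
        Polynomial.eval₂_X, Polynomial.eval₂_C, Polynomial.eval₂_C]
      rw [eval_mul, eval_sub, eval_sub, eval_X, eval_C, eval_C]
      have hca : (algebraMap ℝ ℂ) a = (a:ℂ) := rfl
      have hcb : (algebraMap ℝ ℂ) (b^2) = (b:ℂ)^2 := by
        simp [Complex.ofReal_pow]
      rw [hca, hcb, hconjab, hαab]
      linear_combination ((b:ℂ)^2) * Complex.I_sq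
    have hqdvd : q ∣ P := by
      rw [← Polynomial.map_dvd_map' (algebraMap ℝ ℂ), hqc, ← hPcdef]
      have hd1' : (X - C α) ∣ Pc := dvd_iff_isRoot.mpr hα'
      obtain ⟨g, hg⟩ := hd1'
      have hgroot : g.eval ((starRingEnd ℂ) α) = 0 := by
        have := hconjroot
        rw [hg, eval_mul, eval_sub, eval_X, eval_C] at this
        have hne : (starRingEnd ℂ) α - α ≠ 0 := by
          intro h
          apply him
          have : (starRingEnd ℂ) α = α := by linear_combination h
          have h2 := congrArg Complex.im this
          simp [Complex.conj_im] at h2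
          linarith
        exact (mul_eq_zero.mp this).resolve_left hne
      obtain ⟨h, hh⟩ := (dvd_iff_isRoot.mpr hgroot : (X - C ((starRingEnd ℂ) α)) ∣ g)
      exact ⟨h, by rw [hg, hh]; ring⟩
    obtain ⟨P₂, hP₂⟩ := hqdvd
    have hP₂0 : P₂ ≠ 0 := by
      intro h; rw [h, mul_zero] at hP₂; exact hP0 hP₂
    have hq0 : q ≠ 0 := hqmonic.ne_zero
    have hnd : P.natDegree = 2 + P₂.natDegree := by
      rw [hP₂, natDegree_mul hq0 hP₂0, hqdeg]
    have hb0 : b ≠ 0 := him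
    have hqpos : ∀ x : ℝ, 0 < q.eval x := by
      intro x
      rw [hqdef, eval_add, eval_pow, eval_sub, eval_X, eval_C, eval_C]
      have hb2 : 0 < b^2 := lt_of_le_of_ne (sq_nonneg b) (Ne.symm (pow_ne_zero 2 hb0))
      nlinarith [sq_nonneg (x - a)]
    have hpos₂ : ∀ x ∈ Set.Icc (0:ℝ) 1, 0 ≤ P₂.eval x := by
      intro x hx
      have h1 := hpos x hx
      rw [hP₂, eval_mul] at h1
      nlinarith [hqpos x]
    obtain ⟨Q₂, hQ₂deg, hQ₂⟩ := IH (d-2) (by omega) P₂ (by omega) hpos₂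
    obtain ⟨β, hβ, hsum⟩ := exists_beta (4*α - 2)
    have hβpos : 0 < (norm : ℂ → ℝ) β := norm_pos_iff.mpr hβ
    have hq2 : ∀ θ : ℝ, q.eval (Real.cos (θ/2)^2)
        = (((norm : ℂ → ℝ) (Complex.exp (Complex.I*θ) - β)
            * (norm : ℂ → ℝ) (Complex.exp (Complex.I*θ) - (starRingEnd ℂ) β))
            / (4 * (norm : ℂ → ℝ) β))^2 := by
      intro θ
      have hkey1 := key_abs α β hβ hsum θ
      have hxc : ((Real.cos (θ/2) : ℂ))^2 = ((Real.cos (θ/2)^2 : ℝ) : ℂ) := by push_cast; ring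
      rw [hxc] at hkey1
      have habs : ((norm : ℂ → ℝ) (((Real.cos (θ/2)^2 : ℝ) : ℂ) - α))^2
          = (Real.cos (θ/2)^2 - a)^2 + b^2 := by
        rw [Complex.sq_norm, Complex.normSq_apply, Complex.sub_re, Complex.sub_im,
          Complex.ofReal_re, Complex.ofReal_im, zero_sub, ← hadef, ← hbdef]
        ring
      have hA : (norm : ℂ → ℝ) (((Real.cos (θ/2)^2 : ℝ) : ℂ) - α)
          = ((norm : ℂ → ℝ) (Complex.exp (Complex.I*θ) - β)
            * (norm : ℂ → ℝ) (Complex.exp (Complex.I*θ) - (starRingEnd ℂ) β))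
            / (4 * (norm : ℂ → ℝ) β) := by
        rw [← hkey1]; field_simp
      rw [hqdef, eval_add, eval_pow, eval_sub, eval_X, eval_C, eval_C, ← hA, habs]
    obtain ⟨Q, hQdeg, hQ⟩ := stepB P₂ q Q₂ β hβ hq2 hQ₂
    refine ⟨Q, by omega, fun θ => ?_⟩
    rw [hP₂]
    exact hQ θ

theorem stmt_13 (N : ℕ) (P : Polynomial ℝ) (hdeg : P.natDegree ≤ N)
    (hpos : ∀ x ∈ Set.Icc (0 : ℝ) 1, 0 ≤ P.eval x) :
    ∃ A : Fin (N + 1) → ℂ, ∀ θ : ℝ,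
      P.eval (Real.cos (θ / 2) ^ 2) =
        ‖∑ k : Fin (N + 1), A k * Complex.exp (Complex.I * (k : ℕ) * θ)‖ ^ 2 := by
  obtain ⟨Q, hQdeg, hQ⟩ := fejer_aux N P hdeg hpos
  refine ⟨fun k => Q.coeff k, fun θ => ?_⟩
  have hsum : ∑ k : Fin (N+1), Q.coeff k * Complex.exp (Complex.I * (k:ℕ) * θ)
      = Q.eval (Complex.exp (Complex.I * θ)) := by
    rw [Polynomial.eval_eq_sum_range' (lt_of_le_of_lt hQdeg (Nat.lt_succ_self N))]
    rw [Fin.sum_univ_eq_sum_range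
      (fun k => Q.coeff k * Complex.exp (Complex.I * (k:ℕ) * θ))]
    apply Finset.sum_congr rfl
    intro k _
    rw [show (Complex.I * (k:ℕ) * θ) = ((k:ℕ):ℂ) * (Complex.I * θ) by ring,
      Complex.exp_nat_mul]
  rw [hQ θ, hsum]
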